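/- arXiv:1005.4373 — 3 statements merged into one kernel-verified Lean document; each statement's English description precedes it below -/
import Mathlib

section
/- Let D be a finite subset of the sphere S_r = {x ∈ ℝ^d : ‖x‖ = r} with D = −D which is a spherical 4-design. Then for every symmetric d×d real matrix H, ∑_{x ∈ D} (xᵀ H x)² = (r⁴|D|/(d(d+2)))·((Tr H)² + 2 Tr(H²)). -/
open Matrix MeasureTheory Metric
open scoped BigOperators

noncomputable section

/-- The rotation-invariant surface measure on the sphere of radius `r` centered at the
origin in `ℝ^d`, obtained by rescaling the surface measure on the unit sphere induced by
Lebesgue measure. -/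
def sphereMeasure (d : ℕ) (r : ℝ) : Measure (EuclideanSpace ℝ (Fin d)) :=
  Measure.map (fun x : EuclideanSpace ℝ (Fin d) => r • x)
    (Measure.map Subtype.val (volume : Measure (EuclideanSpace ℝ (Fin d))).toSphere)

/-- `D` is a spherical `n`-design on the sphere of radius `r` in `ℝ^d`: for every
polynomial `p` of total degree at most `n`, the average of `p` over the sphere (with
respect to the rotation-invariant surface measure) equals the average of `p` over `D`. -/
def IsSphericalDesign {d : ℕ} (r : ℝ) (n : ℕ) (D : Finset (EuclideanSpace ℝ (Fin d))) :
    Prop :=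
  ∀ p : MvPolynomial (Fin d) ℝ, p.totalDegree ≤ n →
    ⨍ x, MvPolynomial.eval (x : Fin d → ℝ) p ∂(sphereMeasure d r)
      = (∑ x ∈ D, MvPolynomial.eval (x : Fin d → ℝ) p) / (D.card : ℝ)


section Aux

open Real Set


noncomputable def gmom (n : ℕ) : ℝ := ∫ x : ℝ, x ^ n * Real.exp (-π * x ^ 2)

lemma gauss_integrable (n : ℕ) :
    Integrable fun x : ℝ => x ^ n * Real.exp (-π * x ^ 2) := by
  have h : (-1 : ℝ) < (n : ℝ) := lt_of_lt_of_le (by norm_num) (Nat.cast_nonneg n)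
  simpa [Real.rpow_natCast] using integrable_rpow_mul_exp_neg_mul_sq Real.pi_pos h

lemma gmom_zero : gmom 0 = 1 := by
  simp only [gmom, pow_zero, one_mul]
  rw [integral_gaussian]
  simp [div_self Real.pi_ne_zero]

lemma gmom_succ_succ (n : ℕ) : gmom (n + 2) = ((n : ℝ) + 1) / (2 * π) * gmom n := by
  have hu : ∀ x : ℝ, HasDerivAt (fun x : ℝ => x ^ (n + 1))
      (((n : ℝ) + 1) * x ^ n) x := by
    intro x
    simpa using hasDerivAt_pow (n + 1) x
  have hv : ∀ x : ℝ, HasDerivAt (fun x : ℝ => Real.exp (-π * x ^ 2))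
      ((-2 * π * x) * Real.exp (-π * x ^ 2)) x := by
    intro x
    have h1 : HasDerivAt (fun x : ℝ => -π * x ^ 2) (-2 * π * x) x := by
      simpa [mul_comm, mul_assoc, mul_left_comm] using
        (hasDerivAt_pow 2 x).const_mul (-π)
    simpa [mul_comm] using h1.exp
  have huv' : Integrable ((fun x : ℝ => x ^ (n + 1)) *
      fun x => (-2 * π * x) * Real.exp (-π * x ^ 2)) := by
    have : ((fun x : ℝ => x ^ (n + 1)) * fun x => (-2 * π * x) * Real.exp (-π * x ^ 2))
        = fun x : ℝ => (-2 * π) * (x ^ (n + 2) * Real.exp (-π * x ^ 2)) := by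
      funext x; simp [Pi.mul_apply]; ring
    rw [this]
    exact (gauss_integrable (n + 2)).const_mul _
  have hu'v : Integrable ((fun x : ℝ => ((n : ℝ) + 1) * x ^ n) *
      fun x => Real.exp (-π * x ^ 2)) := by
    have : ((fun x : ℝ => ((n : ℝ) + 1) * x ^ n) * fun x => Real.exp (-π * x ^ 2))
        = fun x : ℝ => ((n : ℝ) + 1) * (x ^ n * Real.exp (-π * x ^ 2)) := by
      funext x; simp [Pi.mul_apply]; ring
    rw [this]
    exact (gauss_integrable n).const_mul _
  have huv : Integrable ((fun x : ℝ => x ^ (n + 1)) * fun x => Real.exp (-π * x ^ 2)) := by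
    have : ((fun x : ℝ => x ^ (n + 1)) * fun x => Real.exp (-π * x ^ 2))
        = fun x : ℝ => x ^ (n + 1) * Real.exp (-π * x ^ 2) := rfl
    rw [this]; exact gauss_integrable (n + 1)
  have key := MeasureTheory.integral_mul_deriv_eq_deriv_mul_of_integrable (fun x _ => hu x) (fun x _ => hv x) huv' hu'v huv
  have h1 : ∫ x : ℝ, x ^ (n + 1) * ((-2 * π * x) * Real.exp (-π * x ^ 2))
      = (-2 * π) * gmom (n + 2) := by
    rw [gmom, ← MeasureTheory.integral_const_mul _ _]
    congr 1; funext x; ring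
  have h2 : ∫ x : ℝ, ((n : ℝ) + 1) * x ^ n * Real.exp (-π * x ^ 2)
      = ((n : ℝ) + 1) * gmom n := by
    rw [gmom, ← MeasureTheory.integral_const_mul _ _]
    congr 1; funext x; ring
  rw [h1, h2] at key
  have hπ : (2 * π) ≠ 0 := by positivity
  field_simp at key ⊢
  linarith [key]

lemma gmom_odd (n : ℕ) (hn : Odd n) : gmom n = 0 := by
  have h : (∫ x : ℝ, (-x) ^ n * Real.exp (-π * (-x) ^ 2))
      = ∫ x : ℝ, x ^ n * Real.exp (-π * x ^ 2) :=
    (Measure.measurePreserving_neg (volume : Measure ℝ)).integral_comp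
      (Homeomorph.neg ℝ).measurableEmbedding
      (fun x : ℝ => x ^ n * Real.exp (-π * x ^ 2))
  have h2 : ∀ x : ℝ, (-x) ^ n * Real.exp (-π * (-x) ^ 2)
      = -(x ^ n * Real.exp (-π * x ^ 2)) := by
    intro x
    rw [hn.neg_pow, neg_sq]
    ring
  rw [gmom]
  simp_rw [h2, integral_neg] at h
  linarith [h]

lemma gmom_two : gmom 2 = 1 / (2 * π) := by
  have := gmom_succ_succ 0
  rw [gmom_zero] at this
  simpa using this

lemma gmom_four : gmom 4 = 3 * gmom 2 ^ 2 := by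
  have h4 := gmom_succ_succ 2
  rw [gmom_two] at h4 ⊢
  rw [h4]
  field_simp
  ring

lemma gmom_one : gmom 1 = 0 := gmom_odd 1 ⟨0, by norm_num⟩
lemma gmom_three : gmom 3 = 0 := gmom_odd 3 ⟨1, by norm_num⟩
lemma gmom_two_pos : 0 < gmom 2 := by rw [gmom_two]; positivity

lemma norm_sq_euclidean {d : ℕ} (x : EuclideanSpace ℝ (Fin d)) :
    ‖x‖ ^ 2 = ∑ i, x i ^ 2 := by
  rw [EuclideanSpace.norm_eq, Real.sq_sqrt (by positivity)]
  simp [sq_abs]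

lemma GE_eq {d : ℕ} (m : Fin d → ℕ) :
    ∫ x : EuclideanSpace ℝ (Fin d), (∏ i, x i ^ m i) * Real.exp (-π * ‖x‖ ^ 2)
      = ∏ i, gmom (m i) := by
  rw [← ((EuclideanSpace.volume_preserving_symm_measurableEquiv_toLp (Fin d)).symm).integral_comp'
    (g := fun x : EuclideanSpace ℝ (Fin d) => (∏ i, x i ^ m i) * Real.exp (-π * ‖x‖ ^ 2))]
  have key : ∀ y : Fin d → ℝ,
      (∏ i, ((MeasurableEquiv.toLp 2 (Fin d → ℝ)).symm.symm y) i ^ m i)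
        * Real.exp (-π * ‖(MeasurableEquiv.toLp 2 (Fin d → ℝ)).symm.symm y‖ ^ 2)
      = ∏ i, (y i ^ m i * Real.exp (-π * y i ^ 2)) := by
    intro y
    have hcoe : ∀ i, ((MeasurableEquiv.toLp 2 (Fin d → ℝ)).symm.symm y) i = y i := fun i => rfl
    rw [norm_sq_euclidean]
    simp_rw [hcoe]
    rw [Finset.mul_sum, Real.exp_sum, Finset.prod_mul_distrib]
  simp_rw [key]
  rw [MeasureTheory.volume_pi, MeasureTheory.integral_fintype_prod_eq_prod (ι := Fin d)
    (f := fun i (t : ℝ) => t ^ m i * Real.exp (-π * t ^ 2))]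
  rfl

lemma polar_eq {d : ℕ} [Nontrivial (EuclideanSpace ℝ (Fin d))]
    (q : EuclideanSpace ℝ (Fin d) → ℝ)
    (hq : ∀ (c : ℝ) (x : EuclideanSpace ℝ (Fin d)), 0 ≤ c → q (c • x) = c ^ 4 * q x) :
    ∫ x : EuclideanSpace ℝ (Fin d), q x * Real.exp (-π * ‖x‖ ^ 2)
      = (∫ y : sphere (0 : EuclideanSpace ℝ (Fin d)) 1, q (y : EuclideanSpace ℝ (Fin d))
          ∂(volume : Measure (EuclideanSpace ℝ (Fin d))).toSphere)
        * ∫ s : Ioi (0:ℝ), ((s:ℝ) ^ 4 * Real.exp (-π * (s:ℝ) ^ 2))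
            ∂(Measure.volumeIoiPow (Module.finrank ℝ (EuclideanSpace ℝ (Fin d)) - 1)) := by
  calc ∫ x : EuclideanSpace ℝ (Fin d), q x * Real.exp (-π * ‖x‖^2)
      = ∫ x : ({0}ᶜ : Set (EuclideanSpace ℝ (Fin d))),
          q (x : EuclideanSpace ℝ (Fin d)) * Real.exp (-π*‖(x : EuclideanSpace ℝ (Fin d))‖^2)
          ∂((volume : Measure (EuclideanSpace ℝ (Fin d))).comap Subtype.val) := by
        rw [integral_subtype_comap (measurableSet_singleton _).compl
          (fun x : EuclideanSpace ℝ (Fin d) => q x * Real.exp (-π*‖x‖^2)),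
          MeasureTheory.restrict_compl_singleton]
    _ = ∫ z : sphere (0 : EuclideanSpace ℝ (Fin d)) 1 × Ioi (0:ℝ),
          q (z.1 : EuclideanSpace ℝ (Fin d)) * ((z.2:ℝ)^4 * Real.exp (-π * (z.2:ℝ)^2))
          ∂((volume : Measure (EuclideanSpace ℝ (Fin d))).toSphere.prod
            (Measure.volumeIoiPow (Module.finrank ℝ (EuclideanSpace ℝ (Fin d)) - 1))) := by
        rw [← (volume : Measure (EuclideanSpace ℝ (Fin d))).measurePreserving_homeomorphUnitSphereProd.integral_comp
          (Homeomorph.measurableEmbedding _)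
          (fun z : sphere (0 : EuclideanSpace ℝ (Fin d)) 1 × Ioi (0:ℝ) =>
            q (z.1 : EuclideanSpace ℝ (Fin d)) * ((z.2:ℝ)^4 * Real.exp (-π*(z.2:ℝ)^2)))]
        refine integral_congr_ae (Filter.Eventually.of_forall fun x => ?_)
        have hx : (x : EuclideanSpace ℝ (Fin d)) ≠ 0 := x.2
        have hn : ‖(x : EuclideanSpace ℝ (Fin d))‖ ≠ 0 := norm_ne_zero_iff.2 hx
        simp only [homeomorphUnitSphereProd_apply_fst_coe, homeomorphUnitSphereProd_apply_snd_coe]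
        rw [hq _ _ (by positivity)]
        field_simp
    _ = _ := integral_prod_mul (fun y : sphere (0 : EuclideanSpace ℝ (Fin d)) 1 => q (y : EuclideanSpace ℝ (Fin d))) (fun s : Ioi (0:ℝ) => (s:ℝ)^4 * Real.exp (-π*(s:ℝ)^2))

variable {d : ℕ}

lemma prod_ind1 (a : ℕ) (i : Fin d) :
    ∏ t, gmom (if t = i then a else 0) = gmom a := by
  have h : ∀ t : Fin d, gmom (if t = i then a else 0) = if t = i then gmom a else 1 := by
    intro t; by_cases h1 : t = i <;> simp_all [gmom_zero]
  simp_rw [h]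
  rw [Finset.prod_ite_eq']
  simp

lemma prod_ind2 (a b : ℕ) {i j : Fin d} (h : i ≠ j) :
    ∏ t, gmom ((if t = i then a else 0) + (if t = j then b else 0)) = gmom a * gmom b := by
  have hp : ∀ t : Fin d, gmom ((if t = i then a else 0) + (if t = j then b else 0))
      = (if t = i then gmom a else 1) * (if t = j then gmom b else 1) := by
    intro t
    by_cases h1 : t = i <;> by_cases h2 : t = j <;> simp_all [gmom_zero]
  simp_rw [hp]
  rw [Finset.prod_mul_distrib, Finset.prod_ite_eq', Finset.prod_ite_eq']
  simp

lemma prod_ind3 (a b c : ℕ) {i j k : Fin d} (hij : i ≠ j) (hik : i ≠ k) (hjk : j ≠ k) :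
    ∏ t, gmom ((if t = i then a else 0) + (if t = j then b else 0) + (if t = k then c else 0))
      = gmom a * gmom b * gmom c := by
  have hp : ∀ t : Fin d,
      gmom ((if t = i then a else 0) + (if t = j then b else 0) + (if t = k then c else 0))
      = (if t = i then gmom a else 1) * (if t = j then gmom b else 1)
          * (if t = k then gmom c else 1) := by
    intro t
    by_cases h1 : t = i <;> by_cases h2 : t = j <;> by_cases h3 : t = k <;>
      simp_all [gmom_zero]
  simp_rw [hp]
  rw [Finset.prod_mul_distrib, Finset.prod_mul_distrib,
    Finset.prod_ite_eq', Finset.prod_ite_eq', Finset.prod_ite_eq']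
  simp

lemma prod_ind4 (a b c e : ℕ) {i j k l : Fin d} (hij : i ≠ j) (hik : i ≠ k) (hil : i ≠ l)
    (hjk : j ≠ k) (hjl : j ≠ l) (hkl : k ≠ l) :
    ∏ t, gmom ((if t = i then a else 0) + (if t = j then b else 0)
        + (if t = k then c else 0) + (if t = l then e else 0))
      = gmom a * gmom b * gmom c * gmom e := by
  have hp : ∀ t : Fin d,
      gmom ((if t = i then a else 0) + (if t = j then b else 0)
        + (if t = k then c else 0) + (if t = l then e else 0))
      = (if t = i then gmom a else 1) * (if t = j then gmom b else 1)
          * (if t = k then gmom c else 1) * (if t = l then gmom e else 1) := by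
    intro t
    by_cases h1 : t = i <;> by_cases h2 : t = j <;> by_cases h3 : t = k <;>
      by_cases h4 : t = l <;> simp_all [gmom_zero]
  simp_rw [hp]
  rw [Finset.prod_mul_distrib, Finset.prod_mul_distrib, Finset.prod_mul_distrib,
    Finset.prod_ite_eq', Finset.prod_ite_eq', Finset.prod_ite_eq', Finset.prod_ite_eq']
  simp

lemma moment_formula (i j k l : Fin d) :
    ∏ t, gmom ((if t = i then 1 else 0) + (if t = j then 1 else 0)
      + (if t = k then 1 else 0) + (if t = l then 1 else 0))
    = gmom 2 ^ 2 * ((if i = j then (1:ℝ) else 0) * (if k = l then 1 else 0)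
      + (if i = k then (1:ℝ) else 0) * (if j = l then 1 else 0)
      + (if i = l then (1:ℝ) else 0) * (if j = k then 1 else 0)) := by
  by_cases hij : i = j
  · subst hij
    by_cases hkl : k = l
    · subst hkl
      by_cases hik : i = k
      · subst hik
        have hc : ∀ t : Fin d, ((if t = i then 1 else 0) + (if t = i then 1 else 0)
            + (if t = i then 1 else 0) + (if t = i then 1 else 0) : ℕ)
            = (if t = i then 4 else 0) := by
          intro t; by_cases h1 : t = i <;> simp_all
        simp only [hc, prod_ind1]
        rw [gmom_four]; simp; ring
      · have hc : ∀ t : Fin d, ((if t = i then 1 else 0) + (if t = i then 1 else 0)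
            + (if t = k then 1 else 0) + (if t = k then 1 else 0) : ℕ)
            = (if t = i then 2 else 0) + (if t = k then 2 else 0) := by
          intro t; by_cases h1 : t = i <;> by_cases h2 : t = k <;> simp_all
        simp only [hc, prod_ind2 2 2 hik]
        have hik' : i ≠ k := hik
        simp [hik, fun h => hik' (h : i = k), sq]
    · by_cases hik : i = k
      · subst hik
        have hil : i ≠ l := fun h => hkl (by rw [← h])
        have hc : ∀ t : Fin d, ((if t = i then 1 else 0) + (if t = i then 1 else 0)
            + (if t = i then 1 else 0) + (if t = l then 1 else 0) : ℕ)
            = (if t = i then 3 else 0) + (if t = l then 1 else 0) := by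
          intro t; by_cases h1 : t = i <;> by_cases h2 : t = l <;> simp_all
        simp only [hc, prod_ind2 3 1 hil]
        simp [gmom_three, hkl, hil]
      · by_cases hil : i = l
        · subst hil
          have hc : ∀ t : Fin d, ((if t = i then 1 else 0) + (if t = i then 1 else 0)
              + (if t = k then 1 else 0) + (if t = i then 1 else 0) : ℕ)
              = (if t = i then 3 else 0) + (if t = k then 1 else 0) := by
            intro t; by_cases h1 : t = i <;> by_cases h2 : t = k <;> simp_all
          simp only [hc, prod_ind2 3 1 hik]
          simp [gmom_three, hkl, hik]
        · have hc : ∀ t : Fin d, ((if t = i then 1 else 0) + (if t = i then 1 else 0)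
              + (if t = k then 1 else 0) + (if t = l then 1 else 0) : ℕ)
              = (if t = i then 2 else 0) + (if t = k then 1 else 0)
                + (if t = l then 1 else 0) := by
            intro t; by_cases h1 : t = i <;> by_cases h2 : t = k <;> by_cases h3 : t = l <;>
              simp_all
          simp only [hc, prod_ind3 2 1 1 hik hil hkl]
          simp [gmom_one, hkl, hik, hil]
  · by_cases hkl : k = l
    · subst hkl
      by_cases hik : i = k
      · subst hik
        have hji : j ≠ i := fun h => hij h.symm
        have hc : ∀ t : Fin d, ((if t = i then 1 else 0) + (if t = j then 1 else 0)
            + (if t = i then 1 else 0) + (if t = i then 1 else 0) : ℕ)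
            = (if t = i then 3 else 0) + (if t = j then 1 else 0) := by
          intro t; by_cases h1 : t = i <;> by_cases h2 : t = j <;> simp_all
        simp only [hc, prod_ind2 3 1 (fun h => hij h)]
        simp [gmom_three, hij, hji]
      · by_cases hjk : j = k
        · subst hjk
          have hc : ∀ t : Fin d, ((if t = i then 1 else 0) + (if t = j then 1 else 0)
              + (if t = j then 1 else 0) + (if t = j then 1 else 0) : ℕ)
              = (if t = i then 1 else 0) + (if t = j then 3 else 0) := by
            intro t; by_cases h1 : t = i <;> by_cases h2 : t = j <;> simp_all
          simp only [hc, prod_ind2 1 3 hij]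
          simp [gmom_three, gmom_one, hij, hik]
        · have hc : ∀ t : Fin d, ((if t = i then 1 else 0) + (if t = j then 1 else 0)
              + (if t = k then 1 else 0) + (if t = k then 1 else 0) : ℕ)
              = (if t = i then 1 else 0) + (if t = j then 1 else 0)
                + (if t = k then 2 else 0) := by
            intro t; by_cases h1 : t = i <;> by_cases h2 : t = j <;> by_cases h3 : t = k <;>
              simp_all
          simp only [hc, prod_ind3 1 1 2 hij hik hjk]
          simp [gmom_one, hij, hik, hjk]
    · by_cases hik : i = k
      · subst hik
        by_cases hjl : j = l
        · subst hjl
          have hc : ∀ t : Fin d, ((if t = i then 1 else 0) + (if t = j then 1 else 0)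
              + (if t = i then 1 else 0) + (if t = j then 1 else 0) : ℕ)
              = (if t = i then 2 else 0) + (if t = j then 2 else 0) := by
            intro t; by_cases h1 : t = i <;> by_cases h2 : t = j <;> simp_all
          simp only [hc, prod_ind2 2 2 hij]
          simp [hij, sq]
        · have hil : i ≠ l := hkl
          have hc : ∀ t : Fin d, ((if t = i then 1 else 0) + (if t = j then 1 else 0)
              + (if t = i then 1 else 0) + (if t = l then 1 else 0) : ℕ)
              = (if t = i then 2 else 0) + (if t = j then 1 else 0)
                + (if t = l then 1 else 0) := by
            intro t; by_cases h1 : t = i <;> by_cases h2 : t = j <;> by_cases h3 : t = l <;>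
              simp_all
          simp only [hc, prod_ind3 2 1 1 hij hil hjl]
          simp [gmom_one, hij, hjl, hil]
      · by_cases hil : i = l
        · subst hil
          by_cases hjk : j = k
          · subst hjk
            have hc : ∀ t : Fin d, ((if t = i then 1 else 0) + (if t = j then 1 else 0)
                + (if t = j then 1 else 0) + (if t = i then 1 else 0) : ℕ)
                = (if t = i then 2 else 0) + (if t = j then 2 else 0) := by
              intro t; by_cases h1 : t = i <;> by_cases h2 : t = j <;> simp_all
            simp only [hc, prod_ind2 2 2 hij]
            have hji : j ≠ i := fun h => hij h.symm
            simp [hij, hji, sq]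
          · have hki : k ≠ i := fun h => hkl (by rw [h])
            have hc : ∀ t : Fin d, ((if t = i then 1 else 0) + (if t = j then 1 else 0)
                + (if t = k then 1 else 0) + (if t = i then 1 else 0) : ℕ)
                = (if t = i then 2 else 0) + (if t = j then 1 else 0)
                  + (if t = k then 1 else 0) := by
              intro t; by_cases h1 : t = i <;> by_cases h2 : t = j <;> by_cases h3 : t = k <;>
                simp_all
            simp only [hc, prod_ind3 2 1 1 hij hik hjk]
            simp [gmom_one, hij, hik, hjk]
        · by_cases hjk : j = k
          · subst hjk
            have hc : ∀ t : Fin d, ((if t = i then 1 else 0) + (if t = j then 1 else 0)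
                + (if t = j then 1 else 0) + (if t = l then 1 else 0) : ℕ)
                = (if t = i then 1 else 0) + (if t = j then 2 else 0)
                  + (if t = l then 1 else 0) := by
              intro t; by_cases h1 : t = i <;> by_cases h2 : t = j <;> by_cases h3 : t = l <;>
                simp_all
            simp only [hc, prod_ind3 1 2 1 hij hil hkl]
            simp [gmom_one, hij, hil, hkl]
          · by_cases hjl : j = l
            · subst hjl
              have hc : ∀ t : Fin d, ((if t = i then 1 else 0) + (if t = j then 1 else 0)
                  + (if t = k then 1 else 0) + (if t = j then 1 else 0) : ℕ)
                  = (if t = i then 1 else 0) + (if t = j then 2 else 0)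
                    + (if t = k then 1 else 0) := by
                intro t; by_cases h1 : t = i <;> by_cases h2 : t = j <;> by_cases h3 : t = k <;>
                  simp_all
              simp only [hc, prod_ind3 1 2 1 hij hik (fun h => hkl h.symm)]
              simp [gmom_one, hij, hik, hil]
            · have hc : ∀ t : Fin d, ((if t = i then 1 else 0) + (if t = j then 1 else 0)
                  + (if t = k then 1 else 0) + (if t = l then 1 else 0) : ℕ)
                  = (if t = i then 1 else 0) + (if t = j then 1 else 0)
                    + (if t = k then 1 else 0) + (if t = l then 1 else 0) := fun t => rfl
              rw [prod_ind4 1 1 1 1 hij hik hil hjk hjl hkl]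
              simp [gmom_one, hij, hik, hil, hjk, hjl, hkl]

noncomputable def Cr (d : ℕ) : ℝ :=
  ∫ s : Ioi (0:ℝ), ((s:ℝ) ^ 4 * Real.exp (-π * (s:ℝ) ^ 2))
    ∂(Measure.volumeIoiPow (Module.finrank ℝ (EuclideanSpace ℝ (Fin d)) - 1))

variable {d : ℕ}

lemma mono_eq (x : EuclideanSpace ℝ (Fin d)) (i j k l : Fin d) :
    x i * x j * x k * x l
      = ∏ t, x t ^ ((if t = i then 1 else 0) + (if t = j then 1 else 0)
          + (if t = k then 1 else 0) + (if t = l then 1 else 0)) := by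
  have h1 : ∀ a : Fin d, ∏ t, x t ^ (if t = a then 1 else 0) = x a := by
    intro a
    have h : ∀ t : Fin d, x t ^ (if t = a then 1 else 0) = if t = a then x t else 1 := by
      intro t; by_cases ht : t = a <;> simp [ht]
    simp_rw [h, Finset.prod_ite_eq']
    simp
  simp_rw [pow_add, Finset.prod_mul_distrib, h1]

lemma sphere_integrable (f : EuclideanSpace ℝ (Fin d) → ℝ) (hf : Continuous f) :
    Integrable (fun y : sphere (0 : EuclideanSpace ℝ (Fin d)) 1 =>
      f (y : EuclideanSpace ℝ (Fin d)))
      (volume : Measure (EuclideanSpace ℝ (Fin d))).toSphere :=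
  (hf.comp continuous_subtype_val).integrable_of_hasCompactSupport
    (HasCompactSupport.of_compactSpace _)

lemma mono_continuous (i j k l : Fin d) :
    Continuous fun x : EuclideanSpace ℝ (Fin d) => x i * x j * x k * x l := by
  exact (((EuclideanSpace.proj i).continuous.mul
    (EuclideanSpace.proj j).continuous).mul
    (EuclideanSpace.proj k).continuous).mul (EuclideanSpace.proj l).continuous

lemma Sm_mul_Cr [Nontrivial (EuclideanSpace ℝ (Fin d))] (i j k l : Fin d) :
    (∫ y : sphere (0 : EuclideanSpace ℝ (Fin d)) 1,
        ((y : EuclideanSpace ℝ (Fin d)) i * (y : EuclideanSpace ℝ (Fin d)) j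
          * (y : EuclideanSpace ℝ (Fin d)) k * (y : EuclideanSpace ℝ (Fin d)) l)
        ∂(volume : Measure (EuclideanSpace ℝ (Fin d))).toSphere) * Cr d
      = gmom 2 ^ 2 * ((if i = j then (1:ℝ) else 0) * (if k = l then 1 else 0)
      + (if i = k then (1:ℝ) else 0) * (if j = l then 1 else 0)
      + (if i = l then (1:ℝ) else 0) * (if j = k then 1 else 0)) := by
  have hq : ∀ (c : ℝ) (x : EuclideanSpace ℝ (Fin d)), 0 ≤ c →
      (c • x) i * (c • x) j * (c • x) k * (c • x) l = c ^ 4 * (x i * x j * x k * x l) := by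
    intro c x _
    show (c * x i) * (c * x j) * (c * x k) * (c * x l) = _
    ring
  have key := polar_eq (fun x : EuclideanSpace ℝ (Fin d) => x i * x j * x k * x l)
    (fun c x hc => hq c x hc)
  rw [← Cr] at key
  rw [← key]
  simp_rw [mono_eq _ i j k l]
  exact (GE_eq _).trans (moment_formula i j k l)

lemma T_mul_Cr [Nontrivial (EuclideanSpace ℝ (Fin d))] :
    (((volume : Measure (EuclideanSpace ℝ (Fin d))).toSphere univ).toReal) * Cr d
      = gmom 2 ^ 2 * ((d : ℝ) * ((d : ℝ) + 2)) := by
  have hT : (((volume : Measure (EuclideanSpace ℝ (Fin d))).toSphere univ).toReal)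
      = ∑ p : Fin d × Fin d, ∫ y : sphere (0 : EuclideanSpace ℝ (Fin d)) 1,
          ((y : EuclideanSpace ℝ (Fin d)) p.1 * (y : EuclideanSpace ℝ (Fin d)) p.1
            * (y : EuclideanSpace ℝ (Fin d)) p.2 * (y : EuclideanSpace ℝ (Fin d)) p.2)
          ∂(volume : Measure (EuclideanSpace ℝ (Fin d))).toSphere := by
    rw [← integral_finset_sum]
    · have hone : ∀ y : sphere (0 : EuclideanSpace ℝ (Fin d)) 1,
          (1 : ℝ) = ∑ p : Fin d × Fin d,
            ((y : EuclideanSpace ℝ (Fin d)) p.1 * (y : EuclideanSpace ℝ (Fin d)) p.1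
              * (y : EuclideanSpace ℝ (Fin d)) p.2 * (y : EuclideanSpace ℝ (Fin d)) p.2) := by
        intro y
        have h1 : ∑ t, (y : EuclideanSpace ℝ (Fin d)) t ^ 2 = 1 := by
          rw [← norm_sq_euclidean, mem_sphere_zero_iff_norm.1 y.2]
          norm_num
        rw [Fintype.sum_prod_type]
        calc (1:ℝ) = (∑ a, (y : EuclideanSpace ℝ (Fin d)) a ^ 2)
            * (∑ b, (y : EuclideanSpace ℝ (Fin d)) b ^ 2) := by rw [h1]; norm_num
          _ = _ := by
            rw [Finset.sum_mul_sum]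
            exact Finset.sum_congr rfl fun a _ => Finset.sum_congr rfl fun b _ => by ring
      simp_rw [← hone]
      simp [measureReal_def]
    · intro p _
      exact sphere_integrable _ (mono_continuous p.1 p.1 p.2 p.2)
  rw [hT, Finset.sum_mul]
  have hval : ∀ p : Fin d × Fin d,
      (∫ y : sphere (0 : EuclideanSpace ℝ (Fin d)) 1,
        ((y : EuclideanSpace ℝ (Fin d)) p.1 * (y : EuclideanSpace ℝ (Fin d)) p.1
          * (y : EuclideanSpace ℝ (Fin d)) p.2 * (y : EuclideanSpace ℝ (Fin d)) p.2)
        ∂(volume : Measure (EuclideanSpace ℝ (Fin d))).toSphere) * Cr d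
      = gmom 2 ^ 2 * (1 + 2 * (if p.1 = p.2 then (1:ℝ) else 0)) := by
    intro p
    rw [Sm_mul_Cr p.1 p.1 p.2 p.2]
    congr 1
    by_cases h : p.1 = p.2 <;> simp [h] <;> norm_num
  simp_rw [hval]
  rw [← Finset.mul_sum]
  congr 1
  rw [Fintype.sum_prod_type]
  have : ∀ a : Fin d, ∑ b : Fin d, (1 + 2 * (if a = b then (1:ℝ) else 0))
      = (d : ℝ) + 2 := by
    intro a
    rw [Finset.sum_add_distrib]
    simp [Finset.mul_sum, Finset.sum_ite_eq]
  simp_rw [this]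
  simp [Finset.sum_const]
  ring

lemma gmom_two_sq_pos : 0 < gmom 2 ^ 2 := pow_pos gmom_two_pos 2


lemma contraction {d : ℕ} (H : Matrix (Fin d) (Fin d) ℝ) (hH : H.IsSymm) :
    ∑ z : (Fin d × Fin d) × Fin d × Fin d,
      (H z.1.1 z.1.2 * H z.2.1 z.2.2) *
        ((if z.1.1 = z.1.2 then (1:ℝ) else 0) * (if z.2.1 = z.2.2 then 1 else 0)
          + (if z.1.1 = z.2.1 then (1:ℝ) else 0) * (if z.1.2 = z.2.2 then 1 else 0)
          + (if z.1.1 = z.2.2 then (1:ℝ) else 0) * (if z.1.2 = z.2.1 then 1 else 0))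
      = H.trace ^ 2 + 2 * (H * H).trace := by
  have htr2 : (H * H).trace = ∑ i, ∑ j, H i j * H i j := by
    simp only [Matrix.trace, Matrix.diag, Matrix.mul_apply]
    exact Finset.sum_congr rfl fun i _ => Finset.sum_congr rfl fun j _ => by rw [hH.apply i j]
  have htr : H.trace = ∑ i, H i i := rfl
  simp only [Fintype.sum_prod_type, mul_add, Finset.sum_add_distrib]
  have e1 : (∑ i, ∑ j, ∑ k, ∑ l,
      (H i j * H k l) * ((if i = j then (1:ℝ) else 0) * (if k = l then 1 else 0)))
      = H.trace ^ 2 := by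
    simp only [mul_ite, ite_mul, mul_one, mul_zero, zero_mul, one_mul,
      Finset.sum_ite_eq, Finset.sum_ite_eq', Finset.mem_univ, if_true]
    rw [htr, sq, Finset.sum_mul]
    refine Finset.sum_congr rfl fun i _ => ?_
    rw [Finset.mul_sum]
    rw [Finset.sum_comm]
    simp [Finset.sum_ite_eq, Finset.sum_ite_eq']
  have e2 : (∑ i, ∑ j, ∑ k, ∑ l,
      (H i j * H k l) * ((if i = k then (1:ℝ) else 0) * (if j = l then 1 else 0)))
      = (H * H).trace := by
    simp only [mul_ite, ite_mul, mul_one, mul_zero, zero_mul, one_mul,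
      Finset.sum_ite_eq, Finset.sum_ite_eq', Finset.mem_univ, if_true]
    rw [htr2]
  have e3 : (∑ i, ∑ j, ∑ k, ∑ l,
      (H i j * H k l) * ((if i = l then (1:ℝ) else 0) * (if j = k then 1 else 0)))
      = (H * H).trace := by
    simp only [mul_ite, ite_mul, mul_one, mul_zero, zero_mul, one_mul,
      Finset.sum_ite_eq, Finset.sum_ite_eq', Finset.mem_univ, if_true]
    rw [htr2]
    refine Finset.sum_congr rfl fun i _ => Finset.sum_congr rfl fun j _ => ?_
    have hx : ∀ x : Fin d, (∑ x1 : Fin d,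
        if j = x then (if i = x1 then H i j * H x x1 else 0) else 0)
        = if j = x then H i j * H x i else 0 := by
      intro x; by_cases h : j = x <;> simp [h, Finset.sum_ite_eq]
    simp_rw [hx]
    simp [Finset.sum_ite_eq, hH.apply i j]
  rw [e1, e2, e3]; ring

end Aux

/-- Let `D` be a finite nonempty subset of the sphere of radius `r` in
`ℝ^d` with `D = −D` which is a spherical 4-design. Then for every symmetric `d×d` real
matrix `H`, `∑_{x ∈ D} (xᵀHx)² = (r⁴ |D| / (d(d+2))) ((Tr H)² + 2 Tr(H²))`. -/
theorem four_design_quadratic_identity {d : ℕ} (r : ℝ) (hr : 0 < r)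
    (D : Finset (EuclideanSpace ℝ (Fin d))) (hDne : D.Nonempty)
    (hDsph : ∀ x ∈ D, ‖x‖ = r) (hsym : ∀ x, x ∈ D ↔ -x ∈ D)
    (hdes : IsSphericalDesign r 4 D) :
    ∀ H : Matrix (Fin d) (Fin d) ℝ, H.IsSymm →
      ∑ x ∈ D, ((x : Fin d → ℝ) ⬝ᵥ H.mulVec (x : Fin d → ℝ)) ^ 2
        = ((r ^ 4 * (D.card : ℝ)) / (d * (d + 2)))
            * (H.trace ^ 2 + 2 * (H * H).trace) := by
  intro H hH
  classical
  -- d = 0 is impossible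
  rcases Nat.eq_zero_or_pos d with hd0 | hd
  · exfalso
    obtain ⟨x, hx⟩ := hDne
    have hxr := hDsph x hx
    subst hd0
    have hx0 : x = 0 := by
      ext i; exact absurd i.2 (by omega)
    rw [hx0, norm_zero] at hxr
    exact absurd hxr.symm (ne_of_gt hr)
  haveI : Nonempty (Fin d) := ⟨⟨0, hd⟩⟩
  haveI : Nontrivial (EuclideanSpace ℝ (Fin d)) := inferInstance
  -- abbreviations
  set μS := (volume : Measure (EuclideanSpace ℝ (Fin d))).toSphere with hμS
  set T := (μS Set.univ).toReal with hTdef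
  set Dr : ℝ := (d : ℝ) * ((d : ℝ) + 2) with hDr
  have hdR : (0:ℝ) < d := Nat.cast_pos.2 hd
  have hDrpos : 0 < Dr := by rw [hDr]; nlinarith
  have hTpos : 0 < T := by
    rw [hTdef, hμS, Measure.toSphere_apply_univ, ENNReal.toReal_mul]
    apply mul_pos
    · simp [finrank_euclideanSpace_fin]; positivity
    · exact ENNReal.toReal_pos (measure_ball_pos _ _ one_pos).ne' measure_ball_lt_top.ne
  -- Sm values
  set Sm : (Fin d × Fin d) × Fin d × Fin d → ℝ := fun z =>
    ∫ y : sphere (0 : EuclideanSpace ℝ (Fin d)) 1,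
      ((y : EuclideanSpace ℝ (Fin d)) z.1.1 * (y : EuclideanSpace ℝ (Fin d)) z.1.2
        * (y : EuclideanSpace ℝ (Fin d)) z.2.1 * (y : EuclideanSpace ℝ (Fin d)) z.2.2) ∂μS
    with hSmdef
  set Δ : (Fin d × Fin d) × Fin d × Fin d → ℝ := fun z =>
    (if z.1.1 = z.1.2 then (1:ℝ) else 0) * (if z.2.1 = z.2.2 then 1 else 0)
      + (if z.1.1 = z.2.1 then (1:ℝ) else 0) * (if z.1.2 = z.2.2 then 1 else 0)
      + (if z.1.1 = z.2.2 then (1:ℝ) else 0) * (if z.1.2 = z.2.1 then 1 else 0) with hΔdef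
  have hSmC : ∀ z, Sm z * Cr d = gmom 2 ^ 2 * Δ z := fun z =>
    Sm_mul_Cr z.1.1 z.1.2 z.2.1 z.2.2
  have hTC : T * Cr d = gmom 2 ^ 2 * Dr := T_mul_Cr
  have hSmval : ∀ z, Sm z = T * Δ z / Dr := by
    intro z
    have key : gmom 2 ^ 2 * (Sm z * Dr) = gmom 2 ^ 2 * (Δ z * T) := by
      calc gmom 2 ^ 2 * (Sm z * Dr) = Sm z * (gmom 2 ^ 2 * Dr) := by ring
        _ = Sm z * (T * Cr d) := by rw [hTC]
        _ = (Sm z * Cr d) * T := by ring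
        _ = (gmom 2 ^ 2 * Δ z) * T := by rw [hSmC z]
        _ = gmom 2 ^ 2 * (Δ z * T) := by ring
    have h2 := mul_left_cancel₀ (ne_of_gt gmom_two_sq_pos) key
    field_simp
    linarith [h2]
  -- the quadratic form identity
  have hdot : ∀ x : Fin d → ℝ, x ⬝ᵥ H.mulVec x
      = ∑ p : Fin d × Fin d, H p.1 p.2 * (x p.1 * x p.2) := by
    intro x
    rw [Fintype.sum_prod_type]
    simp only [dotProduct, Matrix.mulVec, Finset.mul_sum]
    exact Finset.sum_congr rfl fun i _ => Finset.sum_congr rfl fun j _ => by ring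
  have hexpand : ∀ x : Fin d → ℝ, (x ⬝ᵥ H.mulVec x) ^ 2
      = ∑ z : (Fin d × Fin d) × Fin d × Fin d,
          (H z.1.1 z.1.2 * H z.2.1 z.2.2) * (x z.1.1 * x z.1.2 * x z.2.1 * x z.2.2) := by
    intro x
    rw [hdot, sq, Finset.sum_mul_sum]
    conv_rhs => rw [Fintype.sum_prod_type]
    exact Finset.sum_congr rfl fun p _ => Finset.sum_congr rfl fun p' _ => by ring
  -- the polynomial
  set q : MvPolynomial (Fin d) ℝ :=
    ∑ p : Fin d × Fin d, (MvPolynomial.C (H p.1 p.2) * MvPolynomial.X p.1 * MvPolynomial.X p.2)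
    with hq
  have hdeg : (q * q).totalDegree ≤ 4 := by
    have hq2 : q.totalDegree ≤ 2 := by
      refine (MvPolynomial.totalDegree_finset_sum _ _).trans (Finset.sup_le fun p _ => ?_)
      calc (MvPolynomial.C (H p.1 p.2) * MvPolynomial.X p.1
            * MvPolynomial.X p.2).totalDegree
          ≤ (MvPolynomial.C (H p.1 p.2) * MvPolynomial.X p.1).totalDegree
            + (MvPolynomial.X p.2 : MvPolynomial (Fin d) ℝ).totalDegree :=
          MvPolynomial.totalDegree_mul _ _
        _ ≤ ((MvPolynomial.C (H p.1 p.2) : MvPolynomial (Fin d) ℝ).totalDegree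
            + (MvPolynomial.X p.1 : MvPolynomial (Fin d) ℝ).totalDegree)
            + (MvPolynomial.X p.2 : MvPolynomial (Fin d) ℝ).totalDegree :=
          add_le_add (MvPolynomial.totalDegree_mul _ _) le_rfl
        _ ≤ 2 := by
          rw [MvPolynomial.totalDegree_C, MvPolynomial.totalDegree_X,
            MvPolynomial.totalDegree_X]
    calc (q * q).totalDegree ≤ q.totalDegree + q.totalDegree :=
        MvPolynomial.totalDegree_mul _ _
      _ ≤ 4 := by omega
  have hev : ∀ x : Fin d → ℝ, MvPolynomial.eval x (q * q) = (x ⬝ᵥ H.mulVec x) ^ 2 := by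
    intro x
    have h1 : MvPolynomial.eval x q = x ⬝ᵥ H.mulVec x := by
      rw [hq, _root_.map_sum, hdot]
      exact Finset.sum_congr rfl fun p _ => by
        simp [MvPolynomial.eval_C, MvPolynomial.eval_X, mul_assoc]
    rw [_root_.map_mul, h1, sq]
  -- design property
  have hcard : (0:ℝ) < (D.card : ℝ) := by exact_mod_cast hDne.card_pos
  have hdes' := hdes (q * q) hdeg
  have hsum : ∑ x ∈ D, ((x : Fin d → ℝ) ⬝ᵥ H.mulVec (x : Fin d → ℝ)) ^ 2
      = ∑ x ∈ D, MvPolynomial.eval (x : Fin d → ℝ) (q * q) :=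
    Finset.sum_congr rfl fun x _ => (hev _).symm
  rw [hsum, ← ((eq_div_iff (ne_of_gt hcard)).1 hdes')]
  -- compute the average
  have hφmeas : Measurable fun y : sphere (0 : EuclideanSpace ℝ (Fin d)) 1 =>
      r • (y : EuclideanSpace ℝ (Fin d)) :=
    (measurable_const_smul r).comp measurable_subtype_coe
  have hmap : sphereMeasure d r
      = Measure.map (fun y : sphere (0 : EuclideanSpace ℝ (Fin d)) 1 =>
          r • (y : EuclideanSpace ℝ (Fin d))) μS := by
    rw [sphereMeasure, Measure.map_map (measurable_const_smul r) measurable_subtype_coe]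
    rfl
  have hfc : Continuous fun x : EuclideanSpace ℝ (Fin d) =>
      MvPolynomial.eval (x : Fin d → ℝ) (q * q) := by
    have : (fun x : EuclideanSpace ℝ (Fin d) => MvPolynomial.eval (x : Fin d → ℝ) (q * q))
        = fun x : EuclideanSpace ℝ (Fin d) => ∑ z : (Fin d × Fin d) × Fin d × Fin d,
            (H z.1.1 z.1.2 * H z.2.1 z.2.2) * (x z.1.1 * x z.1.2 * x z.2.1 * x z.2.2) := by
      funext x; rw [hev, hexpand]
    rw [this]
    exact continuous_finset_sum _ fun z _ =>
      continuous_const.mul (mono_continuous z.1.1 z.1.2 z.2.1 z.2.2)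
  have havg : ⨍ x, MvPolynomial.eval (x : Fin d → ℝ) (q * q) ∂(sphereMeasure d r)
      = T⁻¹ * (r ^ 4 * ∑ z, (H z.1.1 z.1.2 * H z.2.1 z.2.2) * Sm z) := by
    rw [hmap, average_eq, measureReal_def, Measure.map_apply hφmeas MeasurableSet.univ, Set.preimage_univ]
    rw [integral_map hφmeas.aemeasurable
      (hfc.aestronglyMeasurable.mono_ac ?hac)]
    case hac => exact Measure.AbsolutelyContinuous.refl _
    have hpt : ∀ y : sphere (0 : EuclideanSpace ℝ (Fin d)) 1,
        MvPolynomial.eval ((r • (y : EuclideanSpace ℝ (Fin d)) : EuclideanSpace ℝ (Fin d))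
          : Fin d → ℝ) (q * q)
        = r ^ 4 * ∑ z : (Fin d × Fin d) × Fin d × Fin d,
            (H z.1.1 z.1.2 * H z.2.1 z.2.2)
              * ((y : EuclideanSpace ℝ (Fin d)) z.1.1 * (y : EuclideanSpace ℝ (Fin d)) z.1.2
                * (y : EuclideanSpace ℝ (Fin d)) z.2.1
                * (y : EuclideanSpace ℝ (Fin d)) z.2.2) := by
      intro y
      rw [hev, hexpand, Finset.mul_sum]
      refine Finset.sum_congr rfl fun z _ => ?_
      show (H z.1.1 z.1.2 * H z.2.1 z.2.2) *
          ((r * (y : EuclideanSpace ℝ (Fin d)) z.1.1) * (r * (y : EuclideanSpace ℝ (Fin d)) z.1.2)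
          * (r * (y : EuclideanSpace ℝ (Fin d)) z.2.1) * (r * (y : EuclideanSpace ℝ (Fin d)) z.2.2)) = _
      ring
    simp_rw [hpt]
    rw [integral_const_mul, integral_finset_sum _ (fun z _ =>
      (sphere_integrable _ (mono_continuous z.1.1 z.1.2 z.2.1 z.2.2)).const_mul _)]
    simp_rw [integral_const_mul]
    rw [smul_eq_mul]
  rw [havg]
  -- final algebra
  have hsum2 : ∑ z, (H z.1.1 z.1.2 * H z.2.1 z.2.2) * Sm z
      = T / Dr * (H.trace ^ 2 + 2 * (H * H).trace) := by
    rw [← contraction H hH, Finset.mul_sum]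
    exact Finset.sum_congr rfl fun z _ => by rw [hSmval z, hΔdef]; ring
  rw [hsum2]
  rw [hDr]
  linear_combination (r ^ 4 * ((d:ℝ) * ((d:ℝ) + 2))⁻¹ * (H.trace ^ 2 + 2 * (H * H).trace)
    * (D.card : ℝ)) * (inv_mul_cancel₀ hTpos.ne')
end
end

section
/- Let Λ₀ ⊂ ℝ^d be a full-rank lattice all of whose shells are 2-designs, and let f : (0,∞) → ℝ be a differentiable function such that ∑_{0 ≠ w ∈ Λ₀} |f′(‖w‖²)|·‖w‖² < ∞. Then for every symmetric d×d matrix H with Tr H = 0, ∑_{0 ≠ w ∈ Λ₀} f′(‖w‖²)·(wᵀ H w) = 0. -/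
open Matrix MeasureTheory
open scoped BigOperators

noncomputable section

/-- A full-rank lattice in `ℝ^d`: the integer span of a basis of `ℝ^d`. -/
def IsFullRankLattice {d : ℕ} (L : Set (Fin d → ℝ)) : Prop :=
  ∃ b : Module.Basis (Fin d) ℝ (Fin d → ℝ),
    L = {x | ∃ z : Fin d → ℤ, x = ∑ i, (z i : ℝ) • b i}

/-- `Λ` is the `m`-periodic set given by the translates `t i + L` of the full-rank
lattice `L`, the translates being pairwise disjoint. -/
def IsPeriodicRep {d m : ℕ} (L : Set (Fin d → ℝ)) (t : Fin m → Fin d → ℝ)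
    (Λ : Set (Fin d → ℝ)) : Prop :=
  IsFullRankLattice L ∧ (∀ i j : Fin m, i ≠ j → t i - t j ∉ L) ∧
    Λ = ⋃ i : Fin m, (fun x => t i + x) '' L

/-- The shell of squared norm `α` of a set in `ℝ^d`. -/
def lshell {d : ℕ} (Λ : Set (Fin d → ℝ)) (α : ℝ) : Set (Fin d → ℝ) :=
  {w | w ∈ Λ ∧ w ⬝ᵥ w = α}

/-- All nonempty shells `Λ(α)` are spherical 2-designs:
`∑_{w ∈ Λ(α)} w wᵀ = (α |Λ(α)| / d) · I_d`. -/
def ShellsAre2Designs {d : ℕ} (Λ : Set (Fin d → ℝ)) : Prop :=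
  ∀ α : ℝ, 0 < α → (lshell Λ α).Nonempty →
    ∑' w : lshell Λ α, Matrix.vecMulVec (w : Fin d → ℝ) (w : Fin d → ℝ)
      = ((α * (Nat.card (lshell Λ α) : ℝ)) / d) • (1 : Matrix (Fin d) (Fin d) ℝ)

/-- All nonempty shells `Λ(α)` are spherical 4-designs:
`∑_{w ∈ Λ(α)} (wᵀHw)² = (α² |Λ(α)| / (d(d+2))) ((Tr H)² + 2 Tr (H²))` for all symmetric `H`. -/
def ShellsAre4Designs {d : ℕ} (Λ : Set (Fin d → ℝ)) : Prop :=
  ∀ α : ℝ, 0 < α → (lshell Λ α).Nonempty →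
    ∀ H : Matrix (Fin d) (Fin d) ℝ, H.IsSymm →
      ∑' w : lshell Λ α, ((w : Fin d → ℝ) ⬝ᵥ H.mulVec (w : Fin d → ℝ)) ^ 2
        = ((α ^ 2 * (Nat.card (lshell Λ α) : ℝ)) / (d * (d + 2)))
            * (H.trace ^ 2 + 2 * (H * H).trace)

lemma dot_sq_pos {d : ℕ} {w : Fin d → ℝ} (hw : w ≠ 0) : 0 < w ⬝ᵥ w := by
  have h0 : ∃ i, w i ≠ 0 := by
    by_contra h; push_neg at h; exact hw (funext h)
  obtain ⟨i, hi⟩ := h0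
  simp only [dotProduct]
  exact Finset.sum_pos' (fun k _ => mul_self_nonneg (w k))
    ⟨i, Finset.mem_univ i, mul_self_pos.mpr hi⟩

lemma trace_mul_vecMulVec {d : ℕ} (H : Matrix (Fin d) (Fin d) ℝ) (w : Fin d → ℝ) :
    (H * Matrix.vecMulVec w w).trace = w ⬝ᵥ H.mulVec w := by
  simp only [Matrix.trace, Matrix.diag, Matrix.mul_apply, Matrix.vecMulVec_apply,
    dotProduct, Matrix.mulVec, Finset.mul_sum]
  refine Finset.sum_congr rfl fun i _ => Finset.sum_congr rfl fun j _ => by ring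

lemma dot_H_le {d : ℕ} (H : Matrix (Fin d) (Fin d) ℝ) (w : Fin d → ℝ) :
    |w ⬝ᵥ H.mulVec w| ≤ (∑ i, ∑ j, |H i j|) * (w ⬝ᵥ w) := by
  have hwij : ∀ i j : Fin d, |w i * w j| ≤ w ⬝ᵥ w := by
    intro i j
    have h1 : w i ^ 2 ≤ w ⬝ᵥ w := by
      have := Finset.single_le_sum (f := fun k => w k * w k)
        (fun k _ => mul_self_nonneg (w k)) (Finset.mem_univ i)
      simpa [dotProduct, sq] using this
    have h2 : w j ^ 2 ≤ w ⬝ᵥ w := by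
      have := Finset.single_le_sum (f := fun k => w k * w k)
        (fun k _ => mul_self_nonneg (w k)) (Finset.mem_univ j)
      simpa [dotProduct, sq] using this
    have h3 : |w i * w j| = |w i| * |w j| := abs_mul _ _
    nlinarith [sq_nonneg (|w i| - |w j|), sq_abs (w i), sq_abs (w j),
      abs_nonneg (w i), abs_nonneg (w j)]
  calc |w ⬝ᵥ H.mulVec w| = |∑ i, ∑ j, w i * (H i j * w j)| := by
        simp [dotProduct, Matrix.mulVec, Finset.mul_sum]
    _ ≤ ∑ i, ∑ j, |w i * (H i j * w j)| :=
        (Finset.abs_sum_le_sum_abs _ _).trans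
          (Finset.sum_le_sum fun i _ => Finset.abs_sum_le_sum_abs _ _)
    _ = ∑ i, ∑ j, |H i j| * |w i * w j| := by
        refine Finset.sum_congr rfl fun i _ => Finset.sum_congr rfl fun j _ => ?_
        rw [show w i * (H i j * w j) = H i j * (w i * w j) by ring, abs_mul]
    _ ≤ ∑ i, ∑ j, |H i j| * (w ⬝ᵥ w) :=
        Finset.sum_le_sum fun i _ => Finset.sum_le_sum fun j _ =>
          mul_le_mul_of_nonneg_left (hwij i j) (abs_nonneg _)
    _ = (∑ i, ∑ j, |H i j|) * (w ⬝ᵥ w) := by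
        rw [Finset.sum_mul]
        exact Finset.sum_congr rfl fun i _ => (Finset.sum_mul _ _ _).symm


/-- If all shells of the full-rank lattice `Λ₀` are 2-designs and `f`
is differentiable on `(0,∞)` with `∑_{0 ≠ w ∈ Λ₀} |f′(‖w‖²)| ‖w‖² < ∞`, then for every
symmetric traceless matrix `H`, `∑_{0 ≠ w ∈ Λ₀} f′(‖w‖²)(wᵀHw) = 0`. -/
theorem gradient_vanishes_of_shells_two_designs {d : ℕ}
    (Λ0 : Set (Fin d → ℝ)) (hΛ : IsFullRankLattice Λ0)
    (h2 : ShellsAre2Designs Λ0)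
    (f : ℝ → ℝ) (hf : ∀ x : ℝ, 0 < x → DifferentiableAt ℝ f x)
    (hsum : Summable (fun w : {w : Fin d → ℝ // w ∈ Λ0 ∧ w ≠ 0} =>
      |deriv f (w.1 ⬝ᵥ w.1)| * (w.1 ⬝ᵥ w.1)))
    (H : Matrix (Fin d) (Fin d) ℝ) (hH : H.IsSymm) (htr : H.trace = 0) :
    ∑' w : {w : Fin d → ℝ // w ∈ Λ0 ∧ w ≠ 0},
      deriv f (w.1 ⬝ᵥ w.1) * (w.1 ⬝ᵥ H.mulVec w.1) = 0 := by
  set T := {w : Fin d → ℝ // w ∈ Λ0 ∧ w ≠ 0} with hT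
  set q : T → ℝ := fun w => w.1 ⬝ᵥ w.1 with hq
  set G : T → ℝ := fun w => deriv f (q w) * (w.1 ⬝ᵥ H.mulVec w.1) with hG
  set C : ℝ := ∑ i, ∑ j, |H i j| with hC
  -- summability of G
  have hGsum : Summable G := by
    refine Summable.of_norm_bounded ((hsum.mul_left C)) ?_
    intro w
    have h1 : |G w| = |deriv f (q w)| * |w.1 ⬝ᵥ H.mulVec w.1| := by
      rw [hG]; exact abs_mul _ _
    have h2' : |deriv f (q w)| * |w.1 ⬝ᵥ H.mulVec w.1|
        ≤ |deriv f (q w)| * (C * (q w)) :=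
      mul_le_mul_of_nonneg_left (dot_H_le H w.1) (abs_nonneg _)
    simp only [Real.norm_eq_abs]
    rw [h1]
    calc |deriv f (q w)| * |w.1 ⬝ᵥ H.mulVec w.1| ≤ |deriv f (q w)| * (C * q w) := h2'
      _ = C * (|deriv f (w.1 ⬝ᵥ w.1)| * (w.1 ⬝ᵥ w.1)) := by rw [hq]; ring
  -- each fiber sums to zero
  have key : ∀ α : ℝ, ∑' w : (q ⁻¹' {α} : Set T), G ↑w = 0 := by
    intro α
    rcases le_or_gt α 0 with hα | hα
    · haveI : IsEmpty (q ⁻¹' {α} : Set T) := by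
        constructor
        rintro ⟨w, hw⟩
        have hqa : q w = α := hw
        have hpos := dot_sq_pos w.2.2
        rw [show w.1 ⬝ᵥ w.1 = q w from rfl, hqa] at hpos
        linarith
      exact tsum_empty
    · by_cases hd0 : deriv f α = 0
      · have hz : ∀ w : (q ⁻¹' {α} : Set T), G ↑w = 0 := by
          rintro ⟨w, hw⟩
          have hqa : q w = α := hw
          simp [hG, hqa, hd0]
        calc ∑' w : (q ⁻¹' {α} : Set T), G ↑w = ∑' _ : (q ⁻¹' {α} : Set T), (0:ℝ) :=
              tsum_congr hz
          _ = 0 := tsum_zero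
      · rcases isEmpty_or_nonempty (q ⁻¹' {α} : Set T) with hE | hN
        · exact tsum_empty
        · -- the fiber is finite
          have hFsum : Summable (fun _ : (q ⁻¹' {α} : Set T) => |deriv f α| * α) := by
            refine (hsum.subtype (q ⁻¹' {α})).congr ?_
            rintro ⟨w, hw⟩
            have hqa : q w = α := hw
            simp only [Function.comp_apply]
            rw [show w.1 ⬝ᵥ w.1 = q w from rfl, hqa]
          haveI hFin : Finite (q ⁻¹' {α} : Set T) := by
            by_contra hInf
            rw [not_finite_iff_infinite] at hInf
            exact (mul_ne_zero (abs_ne_zero.mpr hd0) (ne_of_gt hα))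
              ((summable_const_iff (|deriv f α| * α)).mp hFsum)
          -- equivalence between the fiber and the shell
          have hshell_ne0 : ∀ w : lshell Λ0 α, (w : Fin d → ℝ) ≠ 0 := by
            intro w h0
            have hwα : (w : Fin d → ℝ) ⬝ᵥ (w : Fin d → ℝ) = α := w.2.2
            rw [h0] at hwα
            simp only [dotProduct, Pi.zero_apply, mul_zero, Finset.sum_const_zero] at hwα
            linarith
          let e : (lshell Λ0 α) ≃ (q ⁻¹' {α} : Set T) :=
            { toFun := fun w => ⟨⟨w.1, w.2.1, hshell_ne0 w⟩, w.2.2⟩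
              invFun := fun w => ⟨w.1.1, w.1.2.1, w.2⟩
              left_inv := fun w => Subtype.ext rfl
              right_inv := fun w => Subtype.ext (Subtype.ext rfl) }
          haveI : Finite (lshell Λ0 α) := Finite.of_equiv _ e.symm
          letI : Fintype (lshell Λ0 α) := Fintype.ofFinite _
          letI : Fintype (q ⁻¹' {α} : Set T) := Fintype.ofFinite _
          have hne : (lshell Λ0 α).Nonempty := by
            obtain ⟨w⟩ := hN
            exact ⟨(e.symm w).1, (e.symm w).2⟩
          have h2eq := h2 α hα hne
          rw [tsum_fintype] at h2eq
          have hsum0 : ∑ w : lshell Λ0 α, ((w : Fin d → ℝ) ⬝ᵥ H.mulVec (w : Fin d → ℝ)) = 0 := by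
            have htr2 := congrArg Matrix.trace (congrArg (fun M => H * M) h2eq)
            simp only [Finset.mul_sum, Matrix.trace_sum, Matrix.mul_smul, mul_one,
              Matrix.trace_smul, trace_mul_vecMulVec, htr, smul_eq_mul, mul_zero] at htr2
            exact htr2
          calc ∑' w : (q ⁻¹' {α} : Set T), G ↑w
              = ∑' w : (q ⁻¹' {α} : Set T),
                  deriv f α * ((w : T).1 ⬝ᵥ H.mulVec (w : T).1) := by
                refine tsum_congr ?_
                rintro ⟨w, hw⟩
                have hqa : q w = α := hw
                simp only [hG, hqa]
            _ = deriv f α * ∑' w : (q ⁻¹' {α} : Set T), ((w : T).1 ⬝ᵥ H.mulVec (w : T).1) :=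
                tsum_mul_left
            _ = deriv f α * ∑ w : (q ⁻¹' {α} : Set T), ((w : T).1 ⬝ᵥ H.mulVec (w : T).1) := by
                rw [tsum_fintype]
            _ = deriv f α * ∑ w : lshell Λ0 α, ((w : Fin d → ℝ) ⬝ᵥ H.mulVec (w : Fin d → ℝ)) := by
                rw [← Equiv.sum_comp e (fun w : (q ⁻¹' {α} : Set T) =>
                  ((w : T).1 ⬝ᵥ H.mulVec (w : T).1))]
                exact congrArg _ (Finset.sum_congr rfl fun i _ => rfl)
            _ = 0 := by rw [hsum0, mul_zero]
  have htotal := hGsum.hasSum.tsum_fiberwise q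
  rw [funext key] at htotal
  exact (htotal.unique hasSum_zero)
end
end

section
/- Let Λ₀ ⊂ ℝ^d be a full-rank lattice all of whose shells are 2-designs, let s > d/2, and let v ∈ ℝ^d. Then ∑_{0 ≠ w ∈ Λ₀} ‖w‖^{−2s−4} ( 2(s+1)(w·v)² − ‖w‖²·‖v‖² ) = (2(s+1)/d − 1)·‖v‖²·∑_{0 ≠ w ∈ Λ₀} ‖w‖^{−2s−2}. -/
open Matrix MeasureTheory
open scoped BigOperators

noncomputable section

namespace TransAux

variable {d : ℕ}

/-- sup norm of an integer vector, as a natural number -/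
def zN (z : Fin d → ℤ) : ℕ := Finset.univ.sup fun i => (z i).natAbs

lemma zN_le_iff {z : Fin d → ℤ} {k : ℕ} : zN z ≤ k ↔ ∀ i, (z i).natAbs ≤ k := by
  rw [zN, Finset.sup_le_iff]; simp

lemma le_zN (z : Fin d → ℤ) (i : Fin d) : (z i).natAbs ≤ zN z := by
  exact Finset.le_sup (f := fun i => (z i).natAbs) (Finset.mem_univ i)

lemma one_le_zN {z : Fin d → ℤ} (hz : z ≠ 0) : 1 ≤ zN z := by
  rcases Nat.eq_zero_or_pos (zN z) with h | h
  · exfalso; apply hz; funext i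
    have := le_zN z i
    simp only [h, Nat.le_zero] at this
    simpa [Int.natAbs_eq_zero] using this
  · exact h

lemma finite_zN_le (k : ℕ) : {z : Fin d → ℤ | zN z ≤ k}.Finite := by
  apply Set.Finite.subset (Set.Finite.pi (fun i : Fin d => Set.finite_Icc (-(k : ℤ)) k))
  intro z hz
  simp only [Set.mem_pi, Set.mem_univ, Set.mem_Icc, forall_true_left]
  intro i
  have := zN_le_iff.1 hz i
  omega

lemma card_zN_eq_le (k : ℕ) : Nat.card {z : Fin d → ℤ // zN z = k} ≤ (2 * k + 1) ^ d := by
  haveI : Finite {z : Fin d → ℤ // zN z = k} :=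
    ((finite_zN_le k).subset (fun z hz => le_of_eq hz)).to_subtype
  have key : ∀ (z : {z : Fin d → ℤ // zN z = k}) (i : Fin d),
      (z.1 i + k).toNat < 2 * k + 1 := by
    intro z i
    have h1 : (z.1 i).natAbs ≤ k := le_of_le_of_eq (le_zN z.1 i) z.2
    omega
  have hF : Function.Injective
      (fun (z : {z : Fin d → ℤ // zN z = k}) => (fun i => (⟨(z.1 i + k).toNat, key z i⟩ : Fin (2 * k + 1)))) := by
    intro a b h
    ext i
    have := congrFun h i
    have h1 : (a.1 i).natAbs ≤ k := le_of_le_of_eq (le_zN a.1 i) a.2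
    have h2 : (b.1 i).natAbs ≤ k := le_of_le_of_eq (le_zN b.1 i) b.2
    simp only [Fin.mk.injEq] at this
    omega
  calc Nat.card {z : Fin d → ℤ // zN z = k}
      ≤ Nat.card (Fin d → Fin (2 * k + 1)) := Nat.card_le_card_of_injective _ hF
    _ = (2 * k + 1) ^ d := by
        rw [Nat.card_pi]
        simp [Nat.card_eq_fintype_card]

lemma summable_zN_rpow (r : ℝ) (hr : (d : ℝ) + 1 < r) :
    Summable fun z : {z : Fin d → ℤ // z ≠ 0} => (zN z.1 : ℝ) ^ (-r) := by
  have hfin : ∀ k : ℕ, Finite {c : {z : Fin d → ℤ // z ≠ 0} // zN c.1 = k} := by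
    intro k
    haveI : Finite {z : Fin d → ℤ // zN z = k} :=
      ((finite_zN_le k).subset (fun z hz => le_of_eq hz)).to_subtype
    exact Finite.of_injective
      (fun c => (⟨c.1.1, c.2⟩ : {z : Fin d → ℤ // zN z = k}))
      (by intro a b h; simp only [Subtype.mk.injEq] at h; exact Subtype.ext (Subtype.ext h))
  let T : {z : Fin d → ℤ // z ≠ 0} → ℕ := fun z => zN z.1
  rw [← (Equiv.sigmaFiberEquiv T).summable_iff, Function.comp_def]
  have hnn : ∀ p : Σ k : ℕ, {c // T c = k},
      0 ≤ (zN ((Equiv.sigmaFiberEquiv T) p).1 : ℝ) ^ (-r) :=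
    fun p => Real.rpow_nonneg (Nat.cast_nonneg _) _
  rw [summable_sigma_of_nonneg hnn]
  constructor
  · intro k; exact Summable.of_finite
  · -- bound the fiber sums
    have hb : ∀ k : ℕ,
        ∑' c : {c // T c = k}, (zN ((Equiv.sigmaFiberEquiv T) ⟨k, c⟩).1 : ℝ) ^ (-r)
          ≤ (3 : ℝ) ^ d * (k : ℝ) ^ ((d : ℝ) - r) := by
      intro k
      have hval : ∀ c : {c // T c = k},
          (zN ((Equiv.sigmaFiberEquiv T) ⟨k, c⟩).1 : ℝ) ^ (-r) = (k : ℝ) ^ (-r) := by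
        intro c; rw [show zN ((Equiv.sigmaFiberEquiv T) ⟨k, c⟩).1 = k from c.2]
      have hdr : (0:ℝ) ≤ (d:ℝ) := Nat.cast_nonneg d
      have hr0 : (0:ℝ) < r := by linarith
      rw [tsum_congr hval, tsum_const, nsmul_eq_mul]
      rcases Nat.eq_zero_or_pos k with rfl | hk
      · rw [Nat.cast_zero, Real.zero_rpow (neg_ne_zero.2 hr0.ne'),
          Real.zero_rpow (by intro h; linarith [sub_eq_zero.1 h] : (d : ℝ) - r ≠ 0)]
        simp
      · have hkpos : (0 : ℝ) < (k : ℝ) := by exact_mod_cast hk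
        have hcard : (Nat.card {c // T c = k} : ℝ) ≤ ((2 * k + 1 : ℕ) : ℝ) ^ d := by
          have h1 : Nat.card {c // T c = k} ≤ Nat.card {z : Fin d → ℤ // zN z = k} := by
            haveI : Finite {z : Fin d → ℤ // zN z = k} :=
              ((finite_zN_le k).subset (fun z hz => le_of_eq hz)).to_subtype
            exact Nat.card_le_card_of_injective
              (fun c => (⟨c.1.1, c.2⟩ : {z : Fin d → ℤ // zN z = k}))
              (by intro a b h; simp only [Subtype.mk.injEq] at h; exact Subtype.ext (Subtype.ext h))
          exact_mod_cast le_trans h1 (card_zN_eq_le k)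
        have h3k : ((2 * k + 1 : ℕ) : ℝ) ^ d ≤ (3 : ℝ) ^ d * (k : ℝ) ^ d := by
          rw [← mul_pow]
          apply pow_le_pow_left₀ (by positivity)
          have h1k : (1:ℝ) ≤ (k:ℝ) := by exact_mod_cast hk
          push_cast; linarith
        have hsplit : (k : ℝ) ^ d * (k : ℝ) ^ (-r) = (k : ℝ) ^ ((d : ℝ) - r) := by
          rw [← Real.rpow_natCast (k : ℝ) d, ← Real.rpow_add hkpos, sub_eq_add_neg]
        calc (Nat.card {c // T c = k} : ℝ) * (k : ℝ) ^ (-r)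
            ≤ ((2 * k + 1 : ℕ) : ℝ) ^ d * (k : ℝ) ^ (-r) := by
              apply mul_le_mul_of_nonneg_right hcard (Real.rpow_nonneg hkpos.le _)
          _ ≤ (3 : ℝ) ^ d * (k : ℝ) ^ d * (k : ℝ) ^ (-r) := by
              apply mul_le_mul_of_nonneg_right h3k (Real.rpow_nonneg hkpos.le _)
          _ = (3 : ℝ) ^ d * (k : ℝ) ^ ((d : ℝ) - r) := by rw [mul_assoc, hsplit]
    apply Summable.of_nonneg_of_le (fun k => tsum_nonneg (fun c => hnn ⟨k, c⟩)) hb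
    exact (Real.summable_nat_rpow.2 (by linarith)).mul_left _
lemma sq_norm_le_dot (w : Fin d → ℝ) : ‖w‖ ^ 2 ≤ w ⬝ᵥ w := by
  have hnn : (0:ℝ) ≤ w ⬝ᵥ w := Finset.sum_nonneg fun i _ => mul_self_nonneg (w i)
  have h1 : ‖w‖ ≤ Real.sqrt (w ⬝ᵥ w) := by
    rw [pi_norm_le_iff_of_nonneg (Real.sqrt_nonneg _)]
    intro i
    rw [Real.norm_eq_abs, ← Real.sqrt_sq_eq_abs]
    apply Real.sqrt_le_sqrt
    rw [sq]
    exact Finset.single_le_sum (f := fun j => w j * w j)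
      (fun j _ => mul_self_nonneg (w j)) (Finset.mem_univ i)
  calc ‖w‖ ^ 2 ≤ Real.sqrt (w ⬝ᵥ w) ^ 2 := by
        apply pow_le_pow_left₀ (norm_nonneg w) h1
    _ = w ⬝ᵥ w := Real.sq_sqrt hnn

lemma summable_lattice {Λ0 : Set (Fin d → ℝ)} (hΛ : IsFullRankLattice Λ0)
    (t : ℝ) (ht : (d : ℝ) + 1 < 2 * t) :
    Summable fun w : {w : Fin d → ℝ // w ∈ Λ0 ∧ w ≠ 0} => (w.1 ⬝ᵥ w.1) ^ (-t) := by
  obtain ⟨b, hb⟩ := hΛ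
  have ht0 : 0 < t := by
    have : (0:ℝ) ≤ (d:ℝ) := Nat.cast_nonneg d
    linarith
  set e : (Fin d → ℤ) → (Fin d → ℝ) := fun z => b.equivFun.symm (fun i => (z i : ℝ)) with he_def
  have he : ∀ z, e z = ∑ i, (z i : ℝ) • b i := fun z => b.equivFun_symm_apply _
  have hmem : ∀ z, e z ∈ Λ0 := fun z => by rw [hb]; exact ⟨z, he z⟩
  have hinj : Function.Injective e := by
    intro z1 z2 h
    have h2 := b.equivFun.symm.injective h
    funext i; exact_mod_cast congrFun h2 i
  have hzero : e 0 = 0 := by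
    simp only [he_def]
    have : (fun i : Fin d => ((0 : Fin d → ℤ) i : ℝ)) = 0 := by funext i; simp
    rw [this, map_zero]
  set E : {z : Fin d → ℤ // z ≠ 0} → {w : Fin d → ℝ // w ∈ Λ0 ∧ w ≠ 0} := fun z =>
    ⟨e z.1, hmem z.1, fun h0 => z.2 (hinj (h0.trans hzero.symm))⟩ with hE_def
  have hEbij : Function.Bijective E := by
    constructor
    · intro a b' h
      exact Subtype.ext (hinj (congrArg Subtype.val h))
    · rintro ⟨w, hw, hw0⟩
      rw [hb] at hw; obtain ⟨z, hz⟩ := hw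
      have hz0 : z ≠ 0 := by
        rintro rfl; apply hw0; rw [hz]; simp
      exact ⟨⟨z, hz0⟩, Subtype.ext ((he z).trans hz.symm)⟩
  rw [← (Equiv.ofBijective E hEbij).summable_iff, Function.comp_def]
  -- operator norm of the coordinate map
  set B := LinearMap.toContinuousLinearMap (b.equivFun : (Fin d → ℝ) →ₗ[ℝ] (Fin d → ℝ))
  set C0 : ℝ := ‖B‖ with hC0
  have hkey : ∀ z : {z : Fin d → ℤ // z ≠ 0},
      ((E z).1 ⬝ᵥ (E z).1) ^ (-t) ≤ (zN z.1 : ℝ) ^ (-(2 * t)) * C0 ^ (2 * t) := by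
    intro z
    have hN1 : (1 : ℝ) ≤ (zN z.1 : ℝ) := by exact_mod_cast one_le_zN z.2
    have hNpos : (0 : ℝ) < (zN z.1 : ℝ) := lt_of_lt_of_le one_pos hN1
    -- coordinates of e z
    have hcoord : (fun i => ((z.1 i : ℝ))) = b.equivFun (e z.1) :=
      (b.equivFun.apply_symm_apply _).symm
    -- bound (zN z) ≤ C0 * ‖e z‖
    obtain ⟨i0, hi0⟩ := Finset.exists_mem_eq_sup Finset.univ
      (Finset.univ_nonempty_iff.2 (by
        rcases Nat.eq_zero_or_pos d with rfl | hd
        · exact absurd (Subsingleton.elim z.1 0) z.2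
        · exact ⟨⟨0, hd⟩⟩)) (fun i => (z.1 i).natAbs)
    have hNi : (zN z.1 : ℝ) = |((z.1 i0 : ℝ))| := by
      rw [zN, hi0.2]
      push_cast [Nat.cast_natAbs]
      simp
    have hb1 : (zN z.1 : ℝ) ≤ C0 * ‖e z.1‖ := by
      rw [hNi]
      calc |((z.1 i0 : ℝ))| = ‖(fun i => ((z.1 i : ℝ))) i0‖ := rfl
        _ ≤ ‖(fun i => ((z.1 i : ℝ)))‖ := by simpa using norm_le_pi_norm (fun i => ((z.1 i : ℝ))) i0
        _ = ‖B (e z.1)‖ := by rw [hcoord]; rfl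
        _ ≤ C0 * ‖e z.1‖ := B.le_opNorm _
    have hC0pos : 0 < C0 := by
      by_contra hc
      push_neg at hc
      have : C0 * ‖e z.1‖ ≤ 0 := mul_nonpos_of_nonpos_of_nonneg hc (norm_nonneg _)
      linarith
    have hnormpos : 0 < ‖e z.1‖ := by
      rcases lt_or_ge 0 ‖e z.1‖ with h | h
      · exact h
      · exfalso; nlinarith
    have hdot : ((zN z.1 : ℝ) / C0) ^ 2 ≤ (E z).1 ⬝ᵥ (E z).1 := by
      have h1 : (zN z.1 : ℝ) / C0 ≤ ‖e z.1‖ := by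
        rw [div_le_iff₀ hC0pos]; linarith [hb1]
      calc ((zN z.1 : ℝ) / C0) ^ 2 ≤ ‖e z.1‖ ^ 2 :=
            pow_le_pow_left₀ (by positivity) h1 2
        _ ≤ e z.1 ⬝ᵥ e z.1 := sq_norm_le_dot _
    have hqpos : (0:ℝ) < ((zN z.1 : ℝ) / C0) ^ 2 := by positivity
    calc ((E z).1 ⬝ᵥ (E z).1) ^ (-t) ≤ (((zN z.1 : ℝ) / C0) ^ 2) ^ (-t) :=
          Real.rpow_le_rpow_of_nonpos hqpos hdot (by linarith)
      _ = ((zN z.1 : ℝ) / C0) ^ (2 * (-t)) := by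
          rw [← Real.rpow_natCast ((zN z.1 : ℝ) / C0) 2, ← Real.rpow_mul (by positivity)]
          norm_num
      _ = (zN z.1 : ℝ) ^ (-(2 * t)) * C0 ^ (2 * t) := by
          rw [Real.div_rpow hNpos.le hC0pos.le, show (2 * (-t)) = -(2*t) by ring,
            Real.rpow_neg hC0pos.le, div_eq_mul_inv, inv_inv]
  apply Summable.of_nonneg_of_le (fun z => Real.rpow_nonneg ?_ _) hkey
    ((summable_zN_rpow (2 * t) ht).mul_right _)
  · exact Finset.sum_nonneg fun i _ => mul_self_nonneg _

end TransAux

set_option maxHeartbeats 1000000 in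
/-- If all shells of the full-rank lattice `Λ₀` are 2-designs, `s > d/2`
and `v ∈ ℝ^d`, then `∑_{0 ≠ w ∈ Λ₀} ‖w‖^{−2s−4} (2(s+1)(w·v)² − ‖w‖² ‖v‖²)`
`= (2(s+1)/d − 1) ‖v‖² ∑_{0 ≠ w ∈ Λ₀} ‖w‖^{−2s−2}`. -/
theorem translational_sum_simplification {d : ℕ}
    (Λ0 : Set (Fin d → ℝ)) (hΛ : IsFullRankLattice Λ0)
    (h2 : ShellsAre2Designs Λ0)
    (s : ℝ) (hs : (d : ℝ) / 2 < s) (v : Fin d → ℝ) :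
    ∑' w : {w : Fin d → ℝ // w ∈ Λ0 ∧ w ≠ 0},
      (w.1 ⬝ᵥ w.1) ^ (-s - 2) *
        (2 * (s + 1) * (w.1 ⬝ᵥ v) ^ 2 - (w.1 ⬝ᵥ w.1) * (v ⬝ᵥ v))
      = (2 * (s + 1) / d - 1) * (v ⬝ᵥ v) *
          ∑' w : {w : Fin d → ℝ // w ∈ Λ0 ∧ w ≠ 0}, (w.1 ⬝ᵥ w.1) ^ (-s - 1) := by
  rcases Nat.eq_zero_or_pos d with rfl | hd
  · haveI : IsEmpty {w : Fin 0 → ℝ // w ∈ Λ0 ∧ w ≠ 0} :=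
      ⟨fun w => w.2.2 (Subsingleton.elim w.1 0)⟩
    simp [tsum_empty]
  have hd0 : (0 : ℝ) < (d : ℝ) := by exact_mod_cast hd
  have hs0 : 0 < s := lt_of_le_of_lt (by positivity) hs
  set W := {w : Fin d → ℝ // w ∈ Λ0 ∧ w ≠ 0}
  have hdnn : ∀ w : Fin d → ℝ, 0 ≤ w ⬝ᵥ w :=
    fun w => Finset.sum_nonneg fun i _ => mul_self_nonneg (w i)
  have hpos : ∀ w : W, 0 < w.1 ⬝ᵥ w.1 := by
    intro w
    rcases (hdnn w.1).lt_or_eq with h | h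
    · exact h
    · exact absurd (dotProduct_self_eq_zero.1 h.symm) w.2.2
  have hkey0 : ∀ x : ℝ, 0 < x → x ^ (-s-2) * x = x ^ (-s-1) := by
    intro x hx
    rw [show (-s-1 : ℝ) = (-s-2) + 1 by ring, Real.rpow_add_one hx.ne']
  set f1 : W → ℝ := fun w => (w.1 ⬝ᵥ w.1) ^ (-s-1) with hf1
  set f2 : W → ℝ := fun w => (w.1 ⬝ᵥ w.1) ^ (-s-2) * (w.1 ⬝ᵥ v) ^ 2 with hf2
  have hsum1 : Summable f1 := by
    have := TransAux.summable_lattice hΛ (s+1) (by linarith)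
    simpa [show -(s+1) = -s-1 by ring] using this
  have hCS : ∀ w : Fin d → ℝ, (w ⬝ᵥ v) ^ 2 ≤ (w ⬝ᵥ w) * (v ⬝ᵥ v) := by
    intro w
    simpa [dotProduct, sq] using Finset.sum_mul_sq_le_sq_mul_sq Finset.univ w v
  have hbound2 : ∀ w : W, f2 w ≤ f1 w * (v ⬝ᵥ v) := by
    intro w
    have h1 : f2 w ≤ (w.1 ⬝ᵥ w.1) ^ (-s-2) * ((w.1 ⬝ᵥ w.1) * (v ⬝ᵥ v)) :=
      mul_le_mul_of_nonneg_left (hCS w.1) (Real.rpow_nonneg (hdnn w.1) _)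
    calc f2 w ≤ _ := h1
      _ = f1 w * (v ⬝ᵥ v) := by rw [← mul_assoc, hkey0 _ (hpos w)]
  have hsum2 : Summable f2 := by
    apply Summable.of_nonneg_of_le
      (fun w => mul_nonneg (Real.rpow_nonneg (hdnn w.1) _) (sq_nonneg _)) hbound2
      (hsum1.mul_right _)
  -- key identity via shells
  have hkey : ∑' w : W, f2 w = (v ⬝ᵥ v) / d * ∑' w : W, f1 w := by
    set c : ℝ := (v ⬝ᵥ v) / d with hc
    set g : W → ℝ := fun w => f2 w - c * f1 w with hg_def
    have hg : Summable g := hsum2.sub (hsum1.mul_left c)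
    have h0 : ∑' w : W, g w = 0 := by
      set T : W → ℝ := fun w => w.1 ⬝ᵥ w.1 with hT
      have hinner : ∀ α : ℝ, ∑' cc : {w : W // T w = α}, g cc.1 = 0 := by
        intro α
        rcases isEmpty_or_nonempty {w : W // T w = α} with he | hne
        · exact tsum_empty
        · obtain ⟨w0⟩ := hne
          have hα : 0 < α := by
            have h' := hpos w0.1
            rw [show (w0.1.1 ⬝ᵥ w0.1.1) = α from w0.2] at h'
            exact h'
          -- the fiber is finite
          have hfin : {w : W | T w = α}.Finite := by
            have heps : (0:ℝ) < α ^ (-s-1) := Real.rpow_pos_of_pos hα _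
            have hmem : {w : W | f1 w < α ^ (-s-1)} ∈ Filter.cofinite :=
              hsum1.tendsto_cofinite_zero (Iio_mem_nhds heps)
            rw [Filter.mem_cofinite] at hmem
            apply hmem.subset
            intro w hw
            simp only [Set.mem_compl_iff, Set.mem_setOf_eq, not_lt]
            simp only [Set.mem_setOf_eq] at hw
            rw [hf1]; simp only
            rw [show w.1 ⬝ᵥ w.1 = α from hw]
          haveI : Finite {w : W // T w = α} := hfin.to_subtype
          haveI : Fintype {w : W // T w = α} := Fintype.ofFinite _
          have hsne : (lshell Λ0 α).Nonempty := ⟨w0.1.1, w0.1.2.1, w0.2⟩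
          -- equivalence between the fiber and the shell
          have hne0 : ∀ u : lshell Λ0 α, (u : Fin d → ℝ) ≠ 0 := by
            intro u hu
            have := u.2.2
            rw [hu] at this
            simp [dotProduct] at this
            exact hα.ne this
          let Ψ : {w : W // T w = α} ≃ lshell Λ0 α :=
            { toFun := fun cc => ⟨cc.1.1, cc.1.2.1, cc.2⟩
              invFun := fun u => ⟨⟨u.1, u.2.1, hne0 u⟩, u.2.2⟩
              left_inv := fun cc => rfl
              right_inv := fun u => rfl }
          haveI : Fintype (lshell Λ0 α) := Fintype.ofEquiv _ Ψ
          have h2d := h2 α hα hsne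
          rw [tsum_fintype] at h2d
          -- quadratic form linear map
          let φ : Matrix (Fin d) (Fin d) ℝ →ₗ[ℝ] ℝ :=
            { toFun := fun M => v ⬝ᵥ M.mulVec v
              map_add' := fun M N => by
                rw [Matrix.add_mulVec, dotProduct_add]
              map_smul' := fun r M => by
                simp only [RingHom.id_apply, smul_eq_mul]
                rw [Matrix.smul_mulVec, dotProduct_smul, smul_eq_mul] }
          have hφ1 : ∀ u : Fin d → ℝ, φ (vecMulVec u u) = (u ⬝ᵥ v) ^ 2 := by
            intro u
            show v ⬝ᵥ (vecMulVec u u).mulVec v = (u ⬝ᵥ v) ^ 2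
            have h1 : (vecMulVec u u).mulVec v = fun i => u i * (u ⬝ᵥ v) := by
              funext i
              simp [Matrix.mulVec, vecMulVec_apply, dotProduct, Finset.mul_sum, mul_assoc]
            rw [h1]
            simp only [dotProduct, sq, Finset.sum_mul, Finset.mul_sum]
            exact Finset.sum_congr rfl fun i _ => Finset.sum_congr rfl fun j _ => by ring
          have hNF : (Nat.card (lshell Λ0 α) : ℝ) = (Fintype.card (lshell Λ0 α) : ℝ) := by
            rw [Nat.card_eq_fintype_card]
          have hQ : ∑ u : lshell Λ0 α, ((u : Fin d → ℝ) ⬝ᵥ v) ^ 2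
              = α * (Fintype.card (lshell Λ0 α) : ℝ) / d * (v ⬝ᵥ v) := by
            have hφ := congrArg φ h2d
            rw [map_sum] at hφ
            rw [LinearMap.map_smul] at hφ
            have hφid : φ (1 : Matrix (Fin d) (Fin d) ℝ) = v ⬝ᵥ v := by
              show v ⬝ᵥ (1 : Matrix (Fin d) (Fin d) ℝ).mulVec v = v ⬝ᵥ v
              rw [Matrix.one_mulVec]
            rw [hφid, smul_eq_mul, hNF] at hφ
            calc ∑ u : lshell Λ0 α, ((u : Fin d → ℝ) ⬝ᵥ v) ^ 2
                = ∑ u : lshell Λ0 α, φ (vecMulVec (u : Fin d → ℝ) (u : Fin d → ℝ)) :=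
                  Finset.sum_congr rfl fun u _ => (hφ1 u).symm
              _ = α * (Fintype.card (lshell Λ0 α) : ℝ) / d * (v ⬝ᵥ v) := hφ
          -- now compute the inner tsum
          rw [tsum_fintype]
          rw [← Equiv.sum_comp Ψ.symm (fun cc => g cc.1)]
          have hterm : ∀ u : lshell Λ0 α,
              g (Ψ.symm u).1 = α ^ (-s-2) * ((u : Fin d → ℝ) ⬝ᵥ v) ^ 2 - c * α ^ (-s-1) := by
            intro u
            have hTu : (Ψ.symm u).1.1 ⬝ᵥ (Ψ.symm u).1.1 = α := (Ψ.symm u).2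
            have huu : ((Ψ.symm u).1.1 : Fin d → ℝ) = (u : Fin d → ℝ) := rfl
            rw [hg_def]
            simp only [hf1, hf2]
            rw [hTu, huu]
          rw [Finset.sum_congr rfl (fun u _ => hterm u)]
          rw [Finset.sum_sub_distrib, ← Finset.mul_sum, Finset.sum_const, Finset.card_univ]
          rw [hQ, nsmul_eq_mul, hc]
          have hk2 := hkey0 α hα
          set β := α ^ (-s-2:ℝ)
          set γ := α ^ (-s-1:ℝ)
          field_simp
          linear_combination ((Fintype.card (lshell Λ0 α) : ℝ) * (v ⬝ᵥ v)) * hk2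
      -- assemble: tsum over W = sum over fibers = 0
      have hgσ : Summable fun p : Σ α : ℝ, {w : W // T w = α} =>
          g ((Equiv.sigmaFiberEquiv T) p) :=
        (Equiv.sigmaFiberEquiv T).summable_iff.2 hg
      calc ∑' w : W, g w
          = ∑' p : Σ α : ℝ, {w : W // T w = α}, g ((Equiv.sigmaFiberEquiv T) p) :=
            ((Equiv.sigmaFiberEquiv T).tsum_eq g).symm
        _ = ∑' α : ℝ, ∑' cc : {w : W // T w = α}, g ((Equiv.sigmaFiberEquiv T) ⟨α, cc⟩) :=
            Summable.tsum_sigma hgσ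
        _ = ∑' α : ℝ, (0:ℝ) := tsum_congr fun α => hinner α
        _ = 0 := tsum_zero
    have hsub : ∑' w : W, (f2 w - c * f1 w)
        = (∑' w : W, f2 w) - ∑' w : W, (c * f1 w) :=
      Summable.tsum_sub hsum2 (hsum1.mul_left c)
    rw [tsum_mul_left] at hsub
    have h0' : ∑' w : W, (f2 w - c * f1 w) = 0 := h0
    rw [hsub] at h0'
    linarith [h0']
  -- final assembly
  have hpt : ∀ w : W,
      (w.1 ⬝ᵥ w.1) ^ (-s - 2) * (2 * (s + 1) * (w.1 ⬝ᵥ v) ^ 2 - (w.1 ⬝ᵥ w.1) * (v ⬝ᵥ v))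
        = 2 * (s + 1) * f2 w - (v ⬝ᵥ v) * f1 w := by
    intro w
    rw [hf1, hf2]; simp only
    rw [mul_sub, ← mul_assoc ((w.1 ⬝ᵥ w.1) ^ (-s-2)) (w.1 ⬝ᵥ w.1) (v ⬝ᵥ v),
      hkey0 _ (hpos w)]
    ring
  calc ∑' w : W, (w.1 ⬝ᵥ w.1) ^ (-s - 2) *
        (2 * (s + 1) * (w.1 ⬝ᵥ v) ^ 2 - (w.1 ⬝ᵥ w.1) * (v ⬝ᵥ v))
      = ∑' w : W, (2 * (s + 1) * f2 w - (v ⬝ᵥ v) * f1 w) := tsum_congr hpt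
    _ = 2 * (s + 1) * ∑' w : W, f2 w - (v ⬝ᵥ v) * ∑' w : W, f1 w := by
        rw [Summable.tsum_sub (hsum2.mul_left _) (hsum1.mul_left _), tsum_mul_left, tsum_mul_left]
    _ = (2 * (s + 1) / d - 1) * (v ⬝ᵥ v) * ∑' w : W, f1 w := by
        rw [hkey]; field_simp
end
end
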